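/- The dynamic oracle is always executable: for every valid non-final configuration c, dyna(c) is nonempty and every action in dyna(c) is applicable at c (in particular, at even steps the case analysis on next(c) = (X, p, q) versus the top span (i, j) always falls into one of the three cases p = i ∧ q > j, p < i ∧ q = j, or p < i ∧ q > j). -/

import Mathlib

/-!
Formalization of the span-based Structure/Label transition parsing system of
Cross & Huang (2016), "Span-Based Constituency Parsing with a Structure-Label
System and Provably Optimal Dynamic Oracles".

A configuration is `(z, σ, t)` where `z` is the step number, `σ` the stack of
span boundaries and `t` the set of brackets built so far.  A bracket is a
triple `(X, i, j)` with `X` a nonterminal label and `i < j ≤ n` a span.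
-/

namespace SpanParser

structure Config (N : Type*) where
  z : ℕ
  σ : List ℕ
  t : Finset (N × ℕ × ℕ)

variable {N : Type*}

/-- The span of a bracket. -/
def span (b : N × ℕ × ℕ) : ℕ × ℕ := b.2

/-- Top (rightmost) boundary of the stack. -/
def topJ (σ : List ℕ) : ℕ := σ.getLastD 0

/-- Second-to-top boundary of the stack. -/
def topI (σ : List ℕ) : ℕ := σ.dropLast.getLastD 0

/-- Parser actions: shift, combine, label-`X`, and nolabel. -/
inductive Action (N : Type*) where
  | sh : Action N
  | comb : Action N
  | label : N → Action N
  | nolabel : Action N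

variable [DecidableEq N]

/-- Applicability of an action at a configuration (for sentence length `n`). -/
def App (n : ℕ) (c : Config N) : Action N → Prop
  | .sh      => Even c.z ∧ c.σ ≠ [] ∧ topJ c.σ < n
  | .comb    => Even c.z ∧ 3 ≤ c.σ.length
  | .label _ => Odd c.z ∧ 2 ≤ c.σ.length
  | .nolabel => Odd c.z ∧ 2 ≤ c.σ.length ∧ c.z < 4 * n - 1

/-- The result `τ(c)` of applying action `τ` to configuration `c`. -/
def doAct (c : Config N) : Action N → Config N
  | .sh      => ⟨c.z + 1, c.σ ++ [topJ c.σ + 1], c.t⟩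
  | .comb    => ⟨c.z + 1, c.σ.dropLast.dropLast ++ [topJ c.σ], c.t⟩
  | .label X => ⟨c.z + 1, c.σ, insert (X, topI c.σ, topJ c.σ) c.t⟩
  | .nolabel => ⟨c.z + 1, c.σ, c.t⟩

/-- The initial configuration `(0, [0], ∅)`. -/
def initial (N : Type*) : Config N := ⟨0, [0], ∅⟩

/-- One transition step `c ⊢ c'`. -/
def Step (n : ℕ) (c c' : Config N) : Prop := ∃ a, App n c a ∧ c' = doAct c a

/-- `⊢*`: reflexive-transitive closure of the transition relation. -/
def Reaches (n : ℕ) : Config N → Config N → Prop := Relation.ReflTransGen (Step n)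

/-- A configuration is valid if it is reachable from the initial configuration. -/
def Valid (n : ℕ) (c : Config N) : Prop := Reaches n (initial N) c

/-- A final configuration: `σ = [0, n]` and `z = 4n - 2`. -/
def Final (n : ℕ) (c : Config N) : Prop := c.σ = [0, n] ∧ c.z = 4 * n - 2

/-- `D(c)`: the set of trees of final configurations reachable from `c`. -/
def Dset (n : ℕ) (c : Config N) : Set (Finset (N × ℕ × ℕ)) :=
  {t' | ∃ c', Reaches n c c' ∧ Final n c' ∧ c'.t = t'}

/-- `(i,j) ⪯ (p,q)`: span `(i,j)` is encompassed by `(p,q)`, i.e. `p ≤ i < j ≤ q`. -/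
def Enc (s₁ s₂ : ℕ × ℕ) : Prop := s₂.1 ≤ s₁.1 ∧ s₁.1 < s₁.2 ∧ s₁.2 ≤ s₂.2

/-- `(i,j) ≺ (p,q)`: strict encompassment. -/
def SEnc (s₁ s₂ : ℕ × ℕ) : Prop := Enc s₁ s₂ ∧ s₁ ≠ s₂

/-- `tG` is a gold tree for sentence length `n`: valid spans, pairwise-distinct
spans, pairwise non-crossing spans, and exactly one bracket with span `(0, n)`
(uniqueness follows from distinctness of spans). -/
structure IsGold (n : ℕ) (tG : Finset (N × ℕ × ℕ)) : Prop where
  validSpans : ∀ b ∈ tG, (span b).1 < (span b).2 ∧ (span b).2 ≤ n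
  distinctSpans : ∀ b₁ ∈ tG, ∀ b₂ ∈ tG, span b₁ = span b₂ → b₁ = b₂
  noncrossing : ∀ b₁ ∈ tG, ∀ b₂ ∈ tG,
    Enc (span b₁) (span b₂) ∨ Enc (span b₂) (span b₁) ∨
    (span b₁).2 ≤ (span b₂).1 ∨ (span b₂).2 ≤ (span b₁).1
  root : ∃ X, (X, 0, n) ∈ tG

open Classical in
/-- `left(c)`: gold brackets (strictly, at even steps) encompassing the top
span whose left boundary occurs on the stack. -/
noncomputable def leftSet (tG : Finset (N × ℕ × ℕ)) (c : Config N) :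
    Finset (N × ℕ × ℕ) :=
  tG.filter fun b =>
    (if Even c.z then SEnc (topI c.σ, topJ c.σ) (span b)
     else Enc (topI c.σ, topJ c.σ) (span b)) ∧ (span b).1 ∈ c.σ

open Classical in
/-- `right(c)`: gold brackets entirely on the queue. -/
noncomputable def rightSet (tG : Finset (N × ℕ × ℕ)) (c : Config N) :
    Finset (N × ℕ × ℕ) :=
  tG.filter fun b => topJ c.σ ≤ (span b).1

open Classical in
/-- `reach(c)`: the reachable gold brackets (all of `t_G` at the initial
configuration, whose stack has fewer than two boundaries). -/
noncomputable def reach (tG : Finset (N × ℕ × ℕ)) (c : Config N) :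
    Finset (N × ℕ × ℕ) :=
  if c.σ.length < 2 then tG else leftSet tG c ∪ rightSet tG c

/-- The optimal tree `t*(c) = t ∪ reach(c)`. -/
noncomputable def tstar (tG : Finset (N × ℕ × ℕ)) (c : Config N) :
    Finset (N × ℕ × ℕ) :=
  c.t ∪ reach tG c

/-- `b = next(c)`: the `≺`-minimal element of `left(c)`. -/
def IsNext (tG : Finset (N × ℕ × ℕ)) (c : Config N) (b : N × ℕ × ℕ) : Prop :=
  b ∈ leftSet tG c ∧ ∀ b' ∈ leftSet tG c, Enc (span b) (span b')

/-- The dynamic-oracle policy `dyna(c)` as a predicate on actions. -/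
def Dyna (tG : Finset (N × ℕ × ℕ)) (c : Config N) (a : Action N) : Prop :=
  if c.σ.length < 2 then a = Action.sh
  else if Even c.z then
    ∃ b, IsNext tG c b ∧
      (((span b).1 = topI c.σ ∧ topJ c.σ < (span b).2 ∧ a = Action.sh) ∨
       ((span b).1 < topI c.σ ∧ (span b).2 = topJ c.σ ∧ a = Action.comb) ∨
       ((span b).1 < topI c.σ ∧ topJ c.σ < (span b).2 ∧
          (a = Action.sh ∨ a = Action.comb)))
  else
    (∃ X, (X, topI c.σ, topJ c.σ) ∈ tG ∧ a = Action.label X) ∨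
    ((∀ X, (X, topI c.σ, topJ c.σ) ∉ tG) ∧ a = Action.nolabel)

/-- `F1` of a predicted bracket set `t'` against the gold tree `tG`
(`0` when `t' ∩ tG = ∅`). -/
noncomputable def f1 (tG t' : Finset (N × ℕ × ℕ)) : ℝ :=
  if t' ∩ tG = ∅ then 0
  else
    (2 * (((t' ∩ tG).card : ℝ) / (tG.card : ℝ)) * (((t' ∩ tG).card : ℝ) / (t'.card : ℝ))) /
      ((((t' ∩ tG).card : ℝ) / (tG.card : ℝ)) + (((t' ∩ tG).card : ℝ) / (t'.card : ℝ)))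

/-- `F1(c)`: the best `F1` among trees reachable from `c`. -/
noncomputable def configF1 (n : ℕ) (tG : Finset (N × ℕ × ℕ)) (c : Config N) : ℝ :=
  sSup (f1 tG '' Dset n c)

/-- A run of (applicable) actions from one configuration to another. -/
inductive Run (n : ℕ) : Config N → List (Action N) → Config N → Prop
  | refl (c : Config N) : Run n c [] c
  | step {c c' : Config N} {as : List (Action N)} (a : Action N)
      (happ : App n c a) (h : Run n (doAct c a) as c') : Run n c (a :: as) c'

/-- A run all of whose actions follow the dynamic oracle. -/
inductive DynaRun (n : ℕ) (tG : Finset (N × ℕ × ℕ)) : Config N → Config N → Prop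
  | refl (c : Config N) : DynaRun n tG c c
  | step {c c' : Config N} (a : Action N) (happ : App n c a) (hdyna : Dyna tG c a)
      (h : DynaRun n tG (doAct c a) c') : DynaRun n tG c c'

def isSh : Action N → Bool
  | .sh => true
  | _ => false

def isComb : Action N → Bool
  | .comb => true
  | _ => false

/-- Label-step actions: `label-X` or `nolabel`. -/
def isLabelStep : Action N → Bool
  | .label _ => true
  | .nolabel => true
  | _ => false


section OracleHelpers

lemma topJ_concat (l : List ℕ) (x : ℕ) : topJ (l ++ [x]) = x := by simp [topJ]

lemma stack_decomp (σ : List ℕ) (h : 2 ≤ σ.length) :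
    σ = σ.dropLast.dropLast ++ [topI σ, topJ σ] := by
  induction σ using List.reverseRecOn with
  | nil => simp at h
  | append_singleton l j _ =>
    induction l using List.reverseRecOn with
    | nil => simp at h
    | append_singleton l' i _ =>
      simp [topI, topJ, List.dropLast_concat]

lemma topJ_of_getLast? {l : List ℕ} {x : ℕ} (h : l.getLast? = some x) : topJ l = x := by
  simp [topJ, List.getLastD_eq_getLast?, h]

lemma topI_lt_topJ {σ : List ℕ} (hc : σ.Chain' (· < ·)) (h2 : 2 ≤ σ.length) :
    topI σ < topJ σ := by
  have hd := stack_decomp σ h2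
  rw [hd] at hc
  rw [List.Chain', List.isChain_append] at hc
  simpa using hc.2.1

lemma len3_of_mem_lt {σ : List ℕ} {p : ℕ} (hc : σ.Chain' (· < ·)) (h2 : 2 ≤ σ.length)
    (hp : p ∈ σ) (hlt : p < topI σ) : 3 ≤ σ.length := by
  by_contra h3
  have hij := topI_lt_topJ hc h2
  have hd := stack_decomp σ h2
  have hlen : σ.dropLast.dropLast.length = 0 := by
    have h' := congrArg List.length hd
    simp only [List.length_append, List.length_cons, List.length_nil] at h'
    omega
  rw [List.length_eq_zero_iff] at hlen
  rw [hlen] at hd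
  rw [hd] at hp
  simp at hp
  rcases hp with hp | hp <;> omega

lemma stack_eq_of_top {σ : List ℕ} {n : ℕ}
    (hc : σ.Chain' (· < ·)) (h2 : 2 ≤ σ.length) (hi : topI σ = 0) (hj : topJ σ = n) :
    σ = [0, n] := by
  have hd := stack_decomp σ h2
  rw [hi, hj] at hd
  rcases heq : σ.dropLast.dropLast with _ | ⟨a, l⟩
  · rw [heq] at hd; simpa using hd
  · exfalso
    rw [heq] at hd
    rw [hd] at hc
    rw [List.Chain', List.isChain_append] at hc
    obtain ⟨x, hx⟩ : ∃ x, (a :: l).getLast? = some x :=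
      ⟨_, List.getLast?_eq_getLast (l := a :: l) (by simp)⟩
    have := hc.2.2 x hx 0 (by simp)
    omega

variable [DecidableEq N]

/-- The run-time invariant of valid configurations. -/
structure Inv (n : ℕ) (c : Config N) : Prop where
  ne : c.σ ≠ []
  hd : c.σ.head? = some 0
  chain : c.σ.Chain' (· < ·)
  top_le : topJ c.σ ≤ n
  cnt_even : Even c.z → c.z + 2 * c.σ.length = 4 * topJ c.σ + 2
  cnt_odd : ¬ Even c.z → c.z + 2 * c.σ.length = 4 * topJ c.σ + 1

lemma inv_initial (n : ℕ) : Inv n (initial N) := by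
  refine ⟨by simp [initial], by simp [initial], by simp [initial, List.Chain'], ?_, ?_, ?_⟩
  · simp [initial, topJ]
  · intro _; simp [initial, topJ]
  · intro h; exact absurd (by simp [initial]) h

lemma inv_step {n : ℕ} {c c' : Config N} (h : Inv n c) (hs : Step n c c') : Inv n c' := by
  obtain ⟨a, happ, rfl⟩ := hs
  cases a with
  | sh =>
    obtain ⟨hev, hne, hlt⟩ := happ
    have hJ : topJ (c.σ ++ [topJ c.σ + 1]) = topJ c.σ + 1 := topJ_concat _ _
    have hce := h.cnt_even hev
    refine ⟨by simp [doAct], ?_, ?_, ?_, ?_, ?_⟩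
    · show (c.σ ++ [topJ c.σ + 1]).head? = some 0
      rcases hσ : c.σ with _ | ⟨x, l⟩
      · exact absurd hσ hne
      · have := h.hd; rw [hσ] at this; simpa using this
    · show (c.σ ++ [topJ c.σ + 1]).Chain' (· < ·)
      rw [List.Chain', List.isChain_append]
      refine ⟨h.chain, by simp, ?_⟩
      intro x hx y hy
      simp only [List.head?_cons, Option.mem_def, Option.some.injEq] at hy
      have hx' := topJ_of_getLast? hx
      omega
    · show topJ (c.σ ++ [topJ c.σ + 1]) ≤ n
      rw [hJ]; omega
    · intro hev'
      exfalso
      simp only [doAct] at hev'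
      rw [Nat.even_add_one] at hev'
      exact hev' hev
    · intro _
      show c.z + 1 + 2 * (c.σ ++ [topJ c.σ + 1]).length = 4 * topJ (c.σ ++ [topJ c.σ + 1]) + 1
      rw [hJ]
      simp only [List.length_append, List.length_cons, List.length_nil]
      omega
  | comb =>
    obtain ⟨hev, hlen⟩ := happ
    have hd2 := stack_decomp c.σ (by omega)
    have hce := h.cnt_even hev
    have hlen2 : c.σ.length = c.σ.dropLast.dropLast.length + 2 := by
      have h' := congrArg List.length hd2
      simp only [List.length_append, List.length_cons, List.length_nil] at h'
      omega
    have hlne : c.σ.dropLast.dropLast ≠ [] := by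
      intro hnil; rw [hnil] at hlen2; simp at hlen2; omega
    have hchain := h.chain
    rw [hd2, List.Chain', List.isChain_append] at hchain
    obtain ⟨hcl, hcij, hcross⟩ := hchain
    have hij : topI c.σ < topJ c.σ := by simpa using hcij
    have hJ : topJ (c.σ.dropLast.dropLast ++ [topJ c.σ]) = topJ c.σ := topJ_concat _ _
    refine ⟨by simp [doAct], ?_, ?_, ?_, ?_, ?_⟩
    · show (c.σ.dropLast.dropLast ++ [topJ c.σ]).head? = some 0
      have hh := h.hd
      rw [hd2] at hh
      rcases hσ : c.σ.dropLast.dropLast with _ | ⟨x, l⟩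
      · exact absurd hσ hlne
      · rw [hσ] at hh; simpa using hh
    · show (c.σ.dropLast.dropLast ++ [topJ c.σ]).Chain' (· < ·)
      rw [List.Chain', List.isChain_append]
      refine ⟨hcl, by simp, ?_⟩
      intro x hx y hy
      simp only [List.head?_cons, Option.mem_def, Option.some.injEq] at hy
      have := hcross x hx (topI c.σ) (by simp)
      omega
    · show topJ (c.σ.dropLast.dropLast ++ [topJ c.σ]) ≤ n
      rw [hJ]; exact h.top_le
    · intro hev'
      exfalso
      simp only [doAct] at hev'
      rw [Nat.even_add_one] at hev'
      exact hev' hev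
    · intro _
      show c.z + 1 + 2 * (c.σ.dropLast.dropLast ++ [topJ c.σ]).length = 4 * topJ (c.σ.dropLast.dropLast ++ [topJ c.σ]) + 1
      rw [hJ]
      simp only [List.length_append, List.length_cons, List.length_nil]
      omega
  | label X =>
    obtain ⟨hodd, hlen⟩ := happ
    have hne := Nat.not_even_iff_odd.mpr hodd
    have hco := h.cnt_odd hne
    refine ⟨h.ne, h.hd, h.chain, h.top_le, ?_, ?_⟩
    · intro _; show c.z + 1 + 2 * c.σ.length = 4 * topJ c.σ + 2; omega
    · intro hev'
      exfalso
      simp only [doAct] at hev'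
      rw [Nat.even_add_one, not_not] at hev'
      exact hne hev'
  | nolabel =>
    obtain ⟨hodd, hlen, _⟩ := happ
    have hne := Nat.not_even_iff_odd.mpr hodd
    have hco := h.cnt_odd hne
    refine ⟨h.ne, h.hd, h.chain, h.top_le, ?_, ?_⟩
    · intro _; show c.z + 1 + 2 * c.σ.length = 4 * topJ c.σ + 2; omega
    · intro hev'
      exfalso
      simp only [doAct] at hev'
      rw [Nat.even_add_one, not_not] at hev'
      exact hne hev'

lemma inv_valid {n : ℕ} {c : Config N} (h : Valid n c) : Inv n c := by
  induction h with
  | refl => exact inv_initial n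
  | tail _ hstep ih => exact inv_step ih hstep

lemma mem_leftSet_even {tG : Finset (N × ℕ × ℕ)} {c : Config N} {b : N × ℕ × ℕ}
    (hev : Even c.z) :
    b ∈ leftSet tG c ↔ b ∈ tG ∧ SEnc (topI c.σ, topJ c.σ) (span b) ∧ (span b).1 ∈ c.σ := by
  classical
  simp [leftSet, Finset.mem_filter, if_pos hev, and_assoc]

lemma leftSet_spec {tG : Finset (N × ℕ × ℕ)} {c : Config N} {b : N × ℕ × ℕ}
    (hev : Even c.z) (hb : b ∈ leftSet tG c) :
    b ∈ tG ∧ (span b).1 ≤ topI c.σ ∧ topI c.σ < topJ c.σ ∧ topJ c.σ ≤ (span b).2 ∧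
      ¬((span b).1 = topI c.σ ∧ (span b).2 = topJ c.σ) ∧ (span b).1 ∈ c.σ := by
  rw [mem_leftSet_even hev] at hb
  obtain ⟨h1, ⟨⟨e1, e2, e3⟩, hne⟩, h3⟩ := hb
  refine ⟨h1, e1, e2, e3, ?_, h3⟩
  intro ⟨a1, a2⟩
  exact hne (Prod.ext_iff.mpr ⟨a1.symm, a2.symm⟩)

end OracleHelpers

/-- The dynamic oracle is always executable: at every valid non-final
configuration, `dyna(c)` is nonempty and all its actions are applicable; in
particular at even steps the comparison of `next(c) = (X, p, q)` with the top
span `(i, j)` always falls into one of the three cases `p = i ∧ q > j`,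
`p < i ∧ q = j`, or `p < i ∧ q > j`. -/
theorem dyna_executable (n : ℕ) (hn : 1 ≤ n) (tG : Finset (N × ℕ × ℕ))
    (hG : IsGold n tG) (c : Config N) (hc : Valid n c) (hnf : ¬ Final n c) :
    (∃ a, Dyna tG c a) ∧ (∀ a, Dyna tG c a → App n c a) ∧
      (Even c.z → 2 ≤ c.σ.length → ∀ b, IsNext tG c b →
        ((span b).1 = topI c.σ ∧ topJ c.σ < (span b).2) ∨
        ((span b).1 < topI c.σ ∧ (span b).2 = topJ c.σ) ∨
        ((span b).1 < topI c.σ ∧ topJ c.σ < (span b).2)) := by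
  have inv : Inv n c := inv_valid hc
  by_cases hlt2 : c.σ.length < 2
  · -- the stack is [0]; only `sh` applies
    have hlen1 : c.σ.length = 1 := by
      have := List.length_pos_iff.mpr inv.ne
      omega
    obtain ⟨x, hσ⟩ : ∃ x, c.σ = [x] := List.length_eq_one_iff.mp hlen1
    have hx : x = 0 := by
      have hh := inv.hd; rw [hσ] at hh; simpa using hh
    subst hx
    have hJ0 : topJ c.σ = 0 := by rw [hσ]; rfl
    have hev : Even c.z := by
      by_contra hne
      have hco := inv.cnt_odd hne
      rw [hσ] at hco
      simp [topJ] at hco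
    refine ⟨⟨Action.sh, ?_⟩, ?_, ?_⟩
    · unfold Dyna; rw [if_pos hlt2]
    · intro a ha
      unfold Dyna at ha; rw [if_pos hlt2] at ha; subst ha
      exact ⟨hev, inv.ne, by omega⟩
    · intro _ hl b hb
      exact absurd hl (by omega)
  · push_neg at hlt2
    have hnotlt : ¬ c.σ.length < 2 := by omega
    have hij : topI c.σ < topJ c.σ := topI_lt_topJ inv.chain hlt2
    have htopn : topJ c.σ ≤ n := inv.top_le
    by_cases hev : Even c.z
    · -- structural (even) step
      have tri : ∀ b, IsNext tG c b →
          ((span b).1 = topI c.σ ∧ topJ c.σ < (span b).2) ∨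
          ((span b).1 < topI c.σ ∧ (span b).2 = topJ c.σ) ∨
          ((span b).1 < topI c.σ ∧ topJ c.σ < (span b).2) := by
        intro b hb
        obtain ⟨_, hp, _, hq, hne, _⟩ := leftSet_spec hev hb.1
        omega
      have hroot : (leftSet tG c).Nonempty := by
        obtain ⟨X, hX⟩ := hG.root
        refine ⟨(X, 0, n), ?_⟩
        rw [mem_leftSet_even hev]
        refine ⟨hX, ⟨⟨by simp [span], ?_, ?_⟩, ?_⟩, ?_⟩
        · exact hij
        · exact htopn
        · intro heq
          have h1 : topI c.σ = 0 := congrArg Prod.fst heq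
          have h2 : topJ c.σ = n := congrArg Prod.snd heq
          have hσ : c.σ = [0, n] := stack_eq_of_top inv.chain hlt2 h1 h2
          have hce := inv.cnt_even hev
          rw [hσ] at hce
          simp [topJ] at hce
          exact hnf ⟨hσ, by omega⟩
        · exact List.mem_of_mem_head? (by simp [inv.hd, span])
      have hnext : ∃ b, IsNext tG c b := by
        obtain ⟨b, hb, hmin⟩ := Finset.exists_min_image (leftSet tG c)
          (fun b => (span b).2 - (span b).1) hroot
        refine ⟨b, hb, ?_⟩
        intro b' hb'
        obtain ⟨hbt, hp, _, hq, _, _⟩ := leftSet_spec hev hb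
        obtain ⟨hbt', hp', _, hq', _, _⟩ := leftSet_spec hev hb'
        have hw := hmin b' hb'
        rcases hG.noncrossing b hbt b' hbt' with hcase | hcase | hcase | hcase
        · exact hcase
        · obtain ⟨e1, e2, e3⟩ := hcase
          exact ⟨by omega, by omega, by omega⟩
        · exact absurd hcase (by omega)
        · exact absurd hcase (by omega)
      obtain ⟨b0, hb0⟩ := hnext
      refine ⟨?_, ?_, fun _ _ b hb => tri b hb⟩
      · rcases tri b0 hb0 with h | h | h
        · exact ⟨Action.sh, by
            unfold Dyna; rw [if_neg hnotlt, if_pos hev]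
            exact ⟨b0, hb0, Or.inl ⟨h.1, h.2, rfl⟩⟩⟩
        · exact ⟨Action.comb, by
            unfold Dyna; rw [if_neg hnotlt, if_pos hev]
            exact ⟨b0, hb0, Or.inr (Or.inl ⟨h.1, h.2, rfl⟩)⟩⟩
        · exact ⟨Action.sh, by
            unfold Dyna; rw [if_neg hnotlt, if_pos hev]
            exact ⟨b0, hb0, Or.inr (Or.inr ⟨h.1, h.2, Or.inl rfl⟩)⟩⟩
      · intro a ha
        unfold Dyna at ha; rw [if_neg hnotlt, if_pos hev] at ha
        obtain ⟨b, hbn, hc3⟩ := ha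
        obtain ⟨hbt, hp, _, hq, _, hmem⟩ := leftSet_spec hev hbn.1
        have hbq : (span b).2 ≤ n := (hG.validSpans b hbt).2
        rcases hc3 with ⟨_, hlt, rfl⟩ | ⟨hlt, _, rfl⟩ | ⟨hlt1, hlt2', (rfl | rfl)⟩
        · exact ⟨hev, inv.ne, by omega⟩
        · exact ⟨hev, len3_of_mem_lt inv.chain hlt2 hmem (by omega)⟩
        · exact ⟨hev, inv.ne, by omega⟩
        · exact ⟨hev, len3_of_mem_lt inv.chain hlt2 hmem (by omega)⟩
    · -- label (odd) step
      have hodd : Odd c.z := Nat.not_even_iff_odd.mp hev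
      refine ⟨?_, ?_, fun he => absurd he hev⟩
      · by_cases hl : ∃ X, (X, topI c.σ, topJ c.σ) ∈ tG
        · obtain ⟨X, hX⟩ := hl
          exact ⟨Action.label X, by
            unfold Dyna; rw [if_neg hnotlt, if_neg hev]
            exact Or.inl ⟨X, hX, rfl⟩⟩
        · push_neg at hl
          exact ⟨Action.nolabel, by
            unfold Dyna; rw [if_neg hnotlt, if_neg hev]
            exact Or.inr ⟨hl, rfl⟩⟩
      · intro a ha
        unfold Dyna at ha; rw [if_neg hnotlt, if_neg hev] at ha
        have hco := inv.cnt_odd hev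
        rcases ha with ⟨X, _, rfl⟩ | ⟨_, rfl⟩
        · exact ⟨hodd, hlt2⟩
        · exact ⟨hodd, hlt2, by omega⟩


end SpanParser
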